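/- For the 2×2 positive definite complex matrix A₂ = [[1−a, e],[ē, 1−a]] with det(A₂) > 0, the largest eigenvalue λ of B = √A₂ · σ₁ · A₂^{-1} · σ₁ · √A₂ (where σ₁ = [[0,1],[1,0]]) satisfies λ = 1 + 2·Im(e)²/det(A₂) + √((1 + 2·Im(e)²/det(A₂))² − 1), and det(B) = 1. -/

import Mathlib

open Real
open scoped ComplexOrder

set_option maxHeartbeats 1000000

namespace Matrix.PosSemidef

/-- The positive semidefinite square root of a positive semidefinite matrix -/
noncomputable def sqrt {n 𝕜 : Type*} [Fintype n] [DecidableEq n] [RCLike 𝕜] {A : Matrix n n 𝕜}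
    (hA : A.PosSemidef) : Matrix n n 𝕜 :=
  hA.1.eigenvectorUnitary.1 * Matrix.diagonal ((↑) ∘ (Real.sqrt ∘ hA.1.eigenvalues)) *
    (star hA.1.eigenvectorUnitary : Matrix n n 𝕜)

lemma sqrt_mul_self {n 𝕜 : Type*} [Fintype n] [DecidableEq n] [RCLike 𝕜] {A : Matrix n n 𝕜}
    (hA : A.PosSemidef) : hA.sqrt * hA.sqrt = A := by
  have hU : (star hA.1.eigenvectorUnitary : Matrix n n 𝕜) * hA.1.eigenvectorUnitary.1 = 1 :=
    Unitary.coe_star_mul_self _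
  have hDD : Matrix.diagonal (((↑) ∘ (Real.sqrt ∘ hA.1.eigenvalues)) : n → 𝕜) *
      Matrix.diagonal ((↑) ∘ (Real.sqrt ∘ hA.1.eigenvalues))
      = Matrix.diagonal (RCLike.ofReal ∘ hA.1.eigenvalues) := by
    rw [Matrix.diagonal_mul_diagonal]
    congr 1
    funext i
    simp only [Function.comp_apply]
    rw [← RCLike.ofReal_mul, Real.mul_self_sqrt (hA.eigenvalues_nonneg i)]
  conv_rhs => rw [hA.1.spectral_theorem, Unitary.conjStarAlgAut_apply]
  unfold sqrt
  rw [← hDD]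
  simp only [mul_assoc]
  rw [← mul_assoc (star hA.1.eigenvectorUnitary : Matrix n n 𝕜) hA.1.eigenvectorUnitary.1, hU,
    one_mul]

end Matrix.PosSemidef

lemma trace_eq_sum_eigs {n : Type*} [Fintype n] [DecidableEq n]
    {A : Matrix n n ℂ} (hA : A.IsHermitian) :
    A.trace = ∑ i, (hA.eigenvalues i : ℂ) := by
  conv_lhs => rw [hA.spectral_theorem, Unitary.conjStarAlgAut_apply]
  rw [Matrix.trace_mul_comm, ← mul_assoc, Unitary.coe_star_mul_self, one_mul,
    Matrix.trace_diagonal]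
  rfl

lemma max_eig_lemma (v0 v1 t : ℝ) (hsum : v0 + v1 = 2 * t) (hprod : v0 * v1 = 1)
    (ht : 1 ≤ t) : max v0 v1 = t + Real.sqrt (t ^ 2 - 1) := by
  have hge : t ≤ max v0 v1 := by
    rcases le_total v0 v1 with h | h
    · rw [max_eq_right h]; linarith
    · rw [max_eq_left h]; linarith
  have hq : (max v0 v1 - t) ^ 2 = t ^ 2 - 1 := by
    rcases max_choice v0 v1 with h | h <;> rw [h] <;> nlinarith
  have hs : Real.sqrt (t ^ 2 - 1) = max v0 v1 - t := by
    rw [← hq, Real.sqrt_sq (by linarith)]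
  linarith

/-- For `A₂ = [[1-a, e],[ē, 1-a]]` positive definite (`a ∈ [0,1)`, `|e| < 1-a`) and
`B = √A₂ σ₁ A₂⁻¹ σ₁ √A₂` with `σ₁ = [[0,1],[1,0]]`, we have `det B = 1` and the largest
eigenvalue of `B` equals `1 + 2 Im(e)²/det(A₂) + √((1 + 2 Im(e)²/det(A₂))² - 1)`. -/
theorem stmt_18 (a : ℝ) (ha : a ∈ Set.Ico (0 : ℝ) 1) (e : ℂ) (he : ‖e‖ < 1 - a)
    (hA : (!![(1 - a : ℂ), e; star e, 1 - a]).PosDef)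
    (hB : (hA.posSemidef.sqrt * !![(0 : ℂ), 1; 1, 0] * (!![(1 - a : ℂ), e; star e, 1 - a])⁻¹ *
            !![(0 : ℂ), 1; 1, 0] * hA.posSemidef.sqrt).IsHermitian) :
    let D : ℝ := ((!![(1 - a : ℂ), e; star e, 1 - a]).det).re
    let lam : ℝ := 1 + 2 * e.im ^ 2 / D + Real.sqrt ((1 + 2 * e.im ^ 2 / D) ^ 2 - 1)
    (hA.posSemidef.sqrt * !![(0 : ℂ), 1; 1, 0] * (!![(1 - a : ℂ), e; star e, 1 - a])⁻¹ *
          !![(0 : ℂ), 1; 1, 0] * hA.posSemidef.sqrt).det = 1 ∧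
      (∃ i, hB.eigenvalues i = lam) ∧ ∀ i, hB.eigenvalues i ≤ lam := by
  intro D lam
  set A2 := !![(1 - a : ℂ), e; star e, 1 - a] with hA2def
  set S := hA.posSemidef.sqrt with hSdef
  have hSS : S * S = A2 := hA.posSemidef.sqrt_mul_self
  have hDval : A2.det = (((1 - a) ^ 2 - Complex.normSq e : ℝ) : ℂ) := by
    rw [hA2def, Matrix.det_fin_two_of]
    rw [show (star e : ℂ) = (starRingEnd ℂ) e from rfl]
    rw [Complex.mul_conj]
    push_cast
    ring
  have hDpos : (0:ℝ) < (1 - a) ^ 2 - Complex.normSq e := by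
    have h1 : Complex.normSq e = ‖e‖ ^ 2 := (Complex.sq_norm e).symm
    have h2 : ‖e‖ ^ 2 < (1 - a) ^ 2 := by
      apply sq_lt_sq' _ he
      have := norm_nonneg e
      linarith
    linarith
  have hdetne : A2.det ≠ 0 := by
    rw [hDval]
    exact_mod_cast hDpos.ne'
  have hinv : A2⁻¹ = (A2.det)⁻¹ • !![(1 - a : ℂ), -e; -star e, 1 - a] := by
    rw [Matrix.inv_def, Ring.inverse_eq_inv', hA2def, Matrix.adjugate_fin_two_of]
  have hDeq : D = (1 - a) ^ 2 - Complex.normSq e := by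
    show A2.det.re = _
    rw [hDval]
    exact Complex.ofReal_re _
  -- determinant of B
  have hdetB : (S * !![(0 : ℂ), 1; 1, 0] * A2⁻¹ * !![(0 : ℂ), 1; 1, 0] * S).det = 1 := by
    have hs1 : (!![(0 : ℂ), 1; 1, 0]).det = -1 := by
      rw [Matrix.det_fin_two_of]; ring
    have hSdet : S.det * S.det = A2.det := by
      rw [← Matrix.det_mul, hSS]
    rw [Matrix.det_mul, Matrix.det_mul, Matrix.det_mul, Matrix.det_mul, hs1,
      Matrix.det_nonsing_inv, Ring.inverse_eq_inv']
    field_simp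
    linear_combination hSdet
  -- trace of B
  have htrB : (S * !![(0 : ℂ), 1; 1, 0] * A2⁻¹ * !![(0 : ℂ), 1; 1, 0] * S).trace
      = ((2 + 4 * e.im ^ 2 / ((1 - a) ^ 2 - Complex.normSq e) : ℝ) : ℂ) := by
    rw [Matrix.trace_mul_comm, show S * (S * !![(0 : ℂ), 1; 1, 0] * A2⁻¹ * !![(0 : ℂ), 1; 1, 0])
        = (S * S) * !![(0 : ℂ), 1; 1, 0] * A2⁻¹ * !![(0 : ℂ), 1; 1, 0] by
          rw [← mul_assoc, ← mul_assoc, ← mul_assoc], hSS, hinv]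
    rw [Matrix.mul_smul, Matrix.smul_mul, Matrix.trace_smul, hA2def]
    rw [show (!![(1 - a : ℂ), e; star e, 1 - a] * !![(0 : ℂ), 1; 1, 0] *
        !![(1 - a : ℂ), -e; -star e, 1 - a] * !![(0 : ℂ), 1; 1, 0]).trace
      = 2 * (1-a)^2 - e^2 - (star e)^2 by
        simp [Matrix.mul_fin_two, Matrix.trace_fin_two_of]; ring]
    rw [← hA2def, hDval]
    have hE : e ^ 2 + (star e) ^ 2 = ((2 * (e.re ^ 2 - e.im ^ 2) : ℝ) : ℂ) := by
      simp [Complex.ext_iff, pow_two, Complex.mul_re, Complex.mul_im]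
      constructor <;> ring
    have hre : Complex.normSq e = e.re ^ 2 + e.im ^ 2 := by
      simp [Complex.normSq_apply]; ring
    have hne : (((1 - a) ^ 2 - Complex.normSq e : ℝ) : ℂ) ≠ 0 := by exact_mod_cast hDpos.ne'
    rw [show (2 * (1-a)^2 - e^2 - (star e)^2 : ℂ) = 2 * (1-a)^2 - (e^2 + (star e)^2) by ring, hE]
    rw [smul_eq_mul, inv_mul_eq_div, div_eq_iff hne, ← Complex.ofReal_mul]
    have : (2 * (1 - (a:ℂ)) ^ 2 : ℂ) = ((2 * (1 - a) ^ 2 : ℝ) : ℂ) := by push_cast; ring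
    rw [this, ← Complex.ofReal_sub]
    congr 1
    field_simp
    rw [hre]
    ring
  -- eigenvalue bookkeeping
  have hprodC := hB.det_eq_prod_eigenvalues
  rw [hdetB, Fin.prod_univ_two] at hprodC
  have hprod : hB.eigenvalues 0 * hB.eigenvalues 1 = 1 := by
    have h1 : ((hB.eigenvalues 0 * hB.eigenvalues 1 : ℝ) : ℂ) = ((1:ℝ):ℂ) := by
      push_cast
      exact hprodC.symm
    exact Complex.ofReal_injective h1
  have hsumC := trace_eq_sum_eigs hB
  rw [htrB, Fin.sum_univ_two, ← Complex.ofReal_add] at hsumC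
  have hsum : hB.eigenvalues 0 + hB.eigenvalues 1 = 2 * (1 + 2 * e.im ^ 2 / D) := by
    have h3 : hB.eigenvalues 0 + hB.eigenvalues 1
        = 2 + 4 * e.im ^ 2 / ((1 - a) ^ 2 - Complex.normSq e) :=
      (Complex.ofReal_injective hsumC).symm
    rw [h3, hDeq]
    ring
  have ht : 1 ≤ 1 + 2 * e.im ^ 2 / D := by
    have : 0 ≤ 2 * e.im ^ 2 / D := by
      apply div_nonneg (by positivity)
      rw [hDeq]; linarith
    linarith
  have hmax : max (hB.eigenvalues 0) (hB.eigenvalues 1) = lam := by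
    have := max_eig_lemma _ _ (1 + 2 * e.im ^ 2 / D) hsum hprod ht
    rw [this]
  refine ⟨hdetB, ?_, ?_⟩
  · rcases max_choice (hB.eigenvalues 0) (hB.eigenvalues 1) with h | h
    · exact ⟨0, by rw [← h, hmax]⟩
    · exact ⟨1, by rw [← h, hmax]⟩
  · intro i
    have h01 : i = 0 ∨ i = 1 := by
      rcases i with ⟨n, hn⟩
      interval_cases n
      · exact Or.inl rfl
      · exact Or.inr rfl
    rcases h01 with rfl | rfl
    · rw [← hmax]; exact le_max_left _ _
    · rw [← hmax]; exact le_max_right _ _
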